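/- Let δ > 0, C ∈ ℝ with C ≠ 0, and y₀, u₀ ∈ ℝ. Define u : ℝ → ℝ by u(y) = −C( (y−y₀)² + √2 δ |y−y₀| / |C| ) + u₀. Then u is continuous on ℝ, and for every y ≠ y₀ the function u is twice differentiable at y with u''(y) = −2C and |u'(y)| = 2|C||y−y₀| + √2 δ > √2 δ; moreover the one-sided derivatives at y₀ satisfy u'(y₀±) = ∓ √2 δ C/|C|. In particular u solves H(|u'| − √2 δ) u'' = −2C at every y ≠ y₀, where H(t) = 1 for t > 0 and H(t) = 0 otherwise. -/

import Mathlib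

lemma poly_hasDerivAt (C y₀ u₀ a : ℝ) (y : ℝ) :
    HasDerivAt (fun z => -C * ((z - y₀) ^ 2 + a * (z - y₀)) + u₀)
      (-C * (2 * (y - y₀) + a)) y := by
  have h1 := ((hasDerivAt_id y).sub_const y₀).pow 2
  have h2 := ((hasDerivAt_id y).sub_const y₀).const_mul a
  have h3 := ((h1.add h2).const_mul (-C)).add_const u₀
  exact h3.congr_deriv (by simp only [id_eq]; ring)

/-- Simple shear flow solutions of the Euler/Navier-Stokes fluid:
the profile `u(y) = −C((y−y₀)² + √2 δ |y−y₀|/|C|) + u₀` is continuous, twice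
differentiable away from `y₀` with `u'' = −2C` and `|u'| = 2|C||y−y₀| + √2 δ > √2 δ`
there, has the stated one-sided derivatives at `y₀`, and solves
`H(|u'| − √2 δ) u'' = −2C` at every `y ≠ y₀`. -/
theorem statement10 (δ C y₀ u₀ : ℝ) (hδ : 0 < δ) (hC : C ≠ 0)
    (u : ℝ → ℝ)
    (hu : ∀ y, u y = -C * ((y - y₀) ^ 2 + Real.sqrt 2 * δ * |y - y₀| / |C|) + u₀)
    (H : ℝ → ℝ) (hH : ∀ t, H t = if 0 < t then 1 else 0) :
    Continuous u ∧
    (∀ y, y ≠ y₀ →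
      HasDerivAt u (deriv u y) y ∧
      HasDerivAt (deriv u) (-(2 * C)) y ∧
      |deriv u y| = 2 * |C| * |y - y₀| + Real.sqrt 2 * δ ∧
      Real.sqrt 2 * δ < |deriv u y| ∧
      H (|deriv u y| - Real.sqrt 2 * δ) * deriv (deriv u) y = -(2 * C)) ∧
    HasDerivWithinAt u (-(Real.sqrt 2 * δ * C / |C|)) (Set.Ici y₀) y₀ ∧
    HasDerivWithinAt u (Real.sqrt 2 * δ * C / |C|) (Set.Iic y₀) y₀ := by
  have hCabs : (0:ℝ) < |C| := abs_pos.mpr hC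
  have hs2 : (0:ℝ) < Real.sqrt 2 := by positivity
  set a : ℝ := Real.sqrt 2 * δ / |C| with ha
  have ha0 : 0 < a := by positivity
  have hu' : ∀ y, u y = -C * ((y - y₀) ^ 2 + a * |y - y₀|) + u₀ := by
    intro y; rw [hu y, ha]; ring_nf
  -- derivative on the right
  have hright : ∀ y, y₀ < y → HasDerivAt u (-C * (2 * (y - y₀) + a)) y := by
    intro y hy
    have heq : u =ᶠ[nhds y] (fun z => -C * ((z - y₀) ^ 2 + a * (z - y₀)) + u₀) := by
      filter_upwards [Ioi_mem_nhds hy] with z hz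
      rw [hu' z, abs_of_pos (sub_pos.mpr hz)]
    exact (poly_hasDerivAt C y₀ u₀ a y).congr_of_eventuallyEq heq
  have hleft : ∀ y, y < y₀ → HasDerivAt u (-C * (2 * (y - y₀) - a)) y := by
    intro y hy
    have heq : u =ᶠ[nhds y] (fun z => -C * ((z - y₀) ^ 2 + (-a) * (z - y₀)) + u₀) := by
      filter_upwards [Iio_mem_nhds hy] with z hz
      rw [hu' z, abs_of_neg (sub_neg.mpr hz)]; ring
    have := (poly_hasDerivAt C y₀ u₀ (-a) y).congr_of_eventuallyEq heq
    exact this.congr_deriv (by ring)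
  refine ⟨?_, ?_, ?_, ?_⟩
  · -- continuity
    have : u = fun y => -C * ((y - y₀) ^ 2 + Real.sqrt 2 * δ * |y - y₀| / |C|) + u₀ :=
      funext hu
    rw [this]; fun_prop
  · intro y hy
    rcases hy.lt_or_gt with hy | hy
    · -- y < y₀
      have hd := hleft y hy
      have hderiv : deriv u y = -C * (2 * (y - y₀) - a) := hd.deriv
      have hd2 : HasDerivAt (deriv u) (-(2 * C)) y := by
        have hf : HasDerivAt (fun z => -C * (2 * (z - y₀) - a)) (-(2 * C)) y := by
          have h1 := (((hasDerivAt_id y).sub_const y₀).const_mul 2).sub_const a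
          have := h1.const_mul (-C)
          exact this.congr_deriv (by ring)
        refine hf.congr_of_eventuallyEq ?_
        filter_upwards [Iio_mem_nhds hy] with z hz
        exact (hleft z hz).deriv
      have habs : |deriv u y| = 2 * |C| * |y - y₀| + Real.sqrt 2 * δ := by
        rw [hderiv, abs_mul, abs_neg, abs_of_neg (by nlinarith : 2 * (y - y₀) - a < 0),
          abs_of_neg (sub_neg.mpr hy), ha]
        field_simp
        ring
      have hgt : Real.sqrt 2 * δ < |deriv u y| := by
        rw [habs]
        have : 0 < 2 * |C| * |y - y₀| := by
          have : 0 < |y - y₀| := abs_pos.mpr (sub_ne_zero.mpr (ne_of_lt hy))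
          positivity
        linarith
      refine ⟨hderiv ▸ hd, hd2, habs, hgt, ?_⟩
      rw [hH, if_pos (by linarith), hd2.deriv, one_mul]
    · -- y₀ < y
      have hd := hright y hy
      have hderiv : deriv u y = -C * (2 * (y - y₀) + a) := hd.deriv
      have hd2 : HasDerivAt (deriv u) (-(2 * C)) y := by
        have hf : HasDerivAt (fun z => -C * (2 * (z - y₀) + a)) (-(2 * C)) y := by
          have h1 := (((hasDerivAt_id y).sub_const y₀).const_mul 2).add_const a
          have := h1.const_mul (-C)
          exact this.congr_deriv (by ring)
        refine hf.congr_of_eventuallyEq ?_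
        filter_upwards [Ioi_mem_nhds hy] with z hz
        exact (hright z hz).deriv
      have habs : |deriv u y| = 2 * |C| * |y - y₀| + Real.sqrt 2 * δ := by
        rw [hderiv, abs_mul, abs_neg, abs_of_pos (by nlinarith : 0 < 2 * (y - y₀) + a),
          abs_of_pos (sub_pos.mpr hy), ha]
        field_simp
      have hgt : Real.sqrt 2 * δ < |deriv u y| := by
        rw [habs]
        have : 0 < 2 * |C| * |y - y₀| := by
          have : 0 < |y - y₀| := abs_pos.mpr (sub_ne_zero.mpr (ne_of_gt hy))
          positivity
        linarith
      refine ⟨hderiv ▸ hd, hd2, habs, hgt, ?_⟩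
      rw [hH, if_pos (by linarith), hd2.deriv, one_mul]
  · -- right derivative at y₀
    have hp := (poly_hasDerivAt C y₀ u₀ a y₀).hasDerivWithinAt (s := Set.Ici y₀)
    have h2 : HasDerivWithinAt u (-C * (2 * (y₀ - y₀) + a)) (Set.Ici y₀) y₀ :=
      hp.congr (fun z hz => by rw [hu' z, abs_of_nonneg (sub_nonneg.mpr hz)])
        (by rw [hu' y₀, sub_self, abs_zero])
    convert h2 using 1
    rw [ha]; ring
  · -- left derivative at y₀
    have hp := (poly_hasDerivAt C y₀ u₀ (-a) y₀).hasDerivWithinAt (s := Set.Iic y₀)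
    have h2 : HasDerivWithinAt u (-C * (2 * (y₀ - y₀) + -a)) (Set.Iic y₀) y₀ :=
      hp.congr (fun z hz => by rw [hu' z, abs_of_nonpos (sub_nonpos.mpr hz)]; ring_nf)
        (by rw [hu' y₀, sub_self, abs_zero]; ring_nf)
    convert h2 using 1
    rw [ha]; ring
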